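/- Let C : [ℕ]^{!ω} → ℕ be a regressive coloring of exactly large sets. Define C' : [ℕ]^{!ω} → Fin 2 by: for an exactly large set A = {a₀ < a₁ < ⋯ < a_k} (with k = a₀ ≥ 1), C'(A) = 1 if all exactly large tuples of the form (a₀ − 1, c₁, …, c_{a₀−1}) with {c₁, …, c_{a₀−1}} ⊆ {aᵢ − 1 : 1 ≤ i ≤ k} get the same color under C, and C'(A) = 0 otherwise. If X is an infinite C'-homogeneous set, then Y = {x − 1 : x ∈ X} is min-homogeneous for C. -/

import Mathlib

/-- A finite set `S ⊆ ℕ` is exactly large if `|S| = min S + 1`. -/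
def ExactlyLarge (S : Finset ℕ) : Prop :=
  ∃ h : S.Nonempty, S.card = S.min' h + 1

/-- `L` is homogeneous for a coloring `C` of exactly large sets: `C` is constant
on all exactly large subsets of `L`. -/
def HomogFor {β : Type*} (C : Finset ℕ → β) (L : Set ℕ) : Prop :=
  ∃ c : β, ∀ S : Finset ℕ, ↑S ⊆ L → ExactlyLarge S → C S = c

/-- `H` is min-homogeneous for `C`: on exactly large subsets of `H`, the value
of `C` depends only on the minimum. -/
def MinHomogFor {β : Type*} (C : Finset ℕ → β) (H : Set ℕ) : Prop :=
  ∀ S S' : Finset ℕ, ↑S ⊆ H → ↑S' ⊆ H → ExactlyLarge S → ExactlyLarge S' →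
    S.min = S'.min → C S = C S'

/-- A coloring of exactly large sets is regressive if `C S < min S` whenever `min S > 0`. -/
def RegressiveEL (C : Finset ℕ → ℕ) : Prop :=
  ∀ S : Finset ℕ, ExactlyLarge S → ∀ h : S.Nonempty, 0 < S.min' h → C S < S.min' h

theorem infRamsey (n : ℕ) : ∀ (k : ℕ) (f : Finset ℕ → ℕ) (X : Set ℕ), X.Infinite →
    (∀ S : Finset ℕ, ↑S ⊆ X → S.card = n → f S < k) →
    ∃ Y : Set ℕ, Y ⊆ X ∧ Y.Infinite ∧ ∃ c : ℕ, c < k ∧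
      ∀ S : Finset ℕ, ↑S ⊆ Y → S.card = n → f S = c := by
  induction n with
  | zero =>
    intro k f X hX hf
    refine ⟨X, subset_rfl, hX, f ∅, hf ∅ (by simp) rfl, fun S hS hcard => ?_⟩
    rw [Finset.card_eq_zero.mp hcard]
  | succ n ih =>
    intro k f X hX hf
    have key : ∀ Z : Set ℕ, Z.Infinite → Z ⊆ X → ∃ (W : Set ℕ) (x c : ℕ),
        x ∈ Z ∧ W ⊆ Z ∧ W.Infinite ∧ (∀ w ∈ W, x < w) ∧ c < k ∧
        ∀ S : Finset ℕ, ↑S ⊆ W → S.card = n → f (insert x S) = c := by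
      intro Z hZinf hZX
      obtain ⟨x, hxZ⟩ := hZinf.nonempty
      have hZ' : (Z \ Set.Iic x).Infinite := hZinf.diff (Set.finite_Iic x)
      have hZ'sub : Z \ Set.Iic x ⊆ Z := Set.diff_subset
      have hgt : ∀ w ∈ Z \ Set.Iic x, x < w := fun w hw => by
        simpa using hw.2
      obtain ⟨Y, hYsub, hYinf, c, hck, hc⟩ := ih k (fun S => f (insert x S)) (Z \ Set.Iic x) hZ'
        (by
          intro S hS hcard
          apply hf
          · intro a ha
            rcases Finset.mem_insert.mp ha with rfl | ha
            · exact hZX hxZ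
            · exact hZX (hZ'sub (hS ha))
          · rw [Finset.card_insert_of_notMem, hcard]
            intro hxS
            exact lt_irrefl x (hgt x (hS hxS)))
      exact ⟨Y, x, c, hxZ, hYsub.trans hZ'sub, hYinf,
        fun w hw => hgt w (hYsub hw), hck, hc⟩
    choose W xf cf hxZ hWZ hWinf hgt hck hconst using key
    let A : ℕ → {Z : Set ℕ // Z.Infinite ∧ Z ⊆ X} := fun i =>
      Nat.rec ⟨X, hX, subset_rfl⟩
        (fun _ p => ⟨W p.1 p.2.1 p.2.2,
          hWinf p.1 p.2.1 p.2.2, (hWZ p.1 p.2.1 p.2.2).trans p.2.2⟩) i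
    have hAsucc : ∀ i, (A (i+1)).1 = W (A i).1 (A i).2.1 (A i).2.2 := fun i => rfl
    set x : ℕ → ℕ := fun i => xf (A i).1 (A i).2.1 (A i).2.2 with hxdef
    set c : ℕ → ℕ := fun i => cf (A i).1 (A i).2.1 (A i).2.2 with hcdef
    have hxA : ∀ i, x i ∈ (A i).1 := fun i => hxZ _ _ _
    have hsub : ∀ i, (A (i+1)).1 ⊆ (A i).1 := fun i => by
      rw [hAsucc]; exact hWZ _ _ _
    have hmono : ∀ i j, i ≤ j → (A j).1 ⊆ (A i).1 := by
      intro i j hij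
      induction j with
      | zero => rw [Nat.le_zero.mp hij]
      | succ j ihj =>
        rcases Nat.lt_or_ge i (j+1) with h | h
        · exact (hsub j).trans (ihj (Nat.lt_succ_iff.mp h))
        · rw [Nat.le_antisymm hij h]
    have hgt' : ∀ i, ∀ w ∈ (A (i+1)).1, x i < w := fun i w hw => by
      rw [hAsucc] at hw; exact hgt _ _ _ w hw
    have hxlt : ∀ i j, i < j → x i < x j := fun i j hij =>
      hgt' i (x j) (hmono (i+1) j hij (hxA j))
    have hxinj : Function.Injective x := by
      intro i j h
      rcases lt_trichotomy i j with hij | hij | hij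
      · exact absurd h (Nat.ne_of_lt (hxlt i j hij))
      · exact hij
      · exact absurd h.symm (Nat.ne_of_lt (hxlt j i hij))
    have hconst' : ∀ i, ∀ S : Finset ℕ, ↑S ⊆ (A (i+1)).1 → S.card = n →
        f (insert (x i) S) = c i := fun i S hS hcard => by
      apply hconst (A i).1 (A i).2.1 (A i).2.2 S _ hcard
      rw [← hAsucc]; exact hS
    have hck' : ∀ i, c i < k := fun i => hck _ _ _
    have hpig : ∃ c₀, c₀ < k ∧ {i : ℕ | c i = c₀}.Infinite := by
      by_contra hcon
      push_neg at hcon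
      have hcover : (Set.univ : Set ℕ) ⊆ ⋃ c₀ ∈ Finset.range k, {i : ℕ | c i = c₀} := by
        intro i _
        simp only [Set.mem_iUnion]
        exact ⟨c i, by simpa using hck' i, rfl⟩
      have hfin : (⋃ c₀ ∈ Finset.range k, {i : ℕ | c i = c₀}).Finite := by
        apply Set.Finite.biUnion (Finset.range k).finite_toSet
        intro c₀ hc₀
        exact hcon c₀ (by simpa using hc₀)
      exact Set.infinite_univ (hfin.subset hcover)
    obtain ⟨c₀, hc₀k, hI⟩ := hpig
    refine ⟨x '' {i | c i = c₀}, ?_, hI.image (hxinj.injOn), c₀, hc₀k, ?_⟩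
    · rintro _ ⟨i, _, rfl⟩
      exact (A i).2.2 (hxA i)
    · intro S hS hcard
      have hSne : S.Nonempty := Finset.card_pos.mp (by omega)
      obtain ⟨i, hi, hmin⟩ := hS (S.min'_mem hSne)
      have herase : ↑(S.erase (x i)) ⊆ (A (i+1)).1 := by
        intro b hb
        rw [Finset.coe_erase] at hb
        obtain ⟨hbS, hbne⟩ := hb
        obtain ⟨j, hj, rfl⟩ := hS hbS
        have hij : i < j := by
          rcases lt_trichotomy i j with h | h | h
          · exact h
          · exact absurd (h ▸ rfl) hbne
          · have := hxlt j i h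
            have hle := S.min'_le (x j) hbS
            omega
        exact hmono (i+1) j hij (hxA j)
      have hcd : (S.erase (x i)).card = n := by
        rw [Finset.card_erase_of_mem (hmin ▸ S.min'_mem hSne), hcard]
        omega
      have := hconst' i (S.erase (x i)) herase hcd
      rwa [Finset.insert_erase (hmin ▸ S.min'_mem hSne), hi] at this

lemma aux_min' (m : ℕ) (S : Finset ℕ) (hm : m ∈ S) (h : ∀ s ∈ S, m ≤ s) (hne : S.Nonempty) :
    S.min' hne = m :=
  le_antisymm (Finset.min'_le S m hm) (Finset.le_min' _ _ _ (fun s hs => h s hs))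

/-- Given a regressive coloring `C` of exactly large sets, let `C'` color an
exactly large set `A` (with `min A ≥ 1`) by `1` iff all exactly large sets with
minimum `min A - 1` and remaining elements among `{x - 1 : x ∈ A}` get the same
`C`-color. If `X` is infinite and homogeneous for `C'`, then
`Y = {x - 1 : x ∈ X}` is min-homogeneous for `C`. -/
theorem rt_implies_km_coloring (C : Finset ℕ → ℕ) (hreg : RegressiveEL C)
    (C' : Finset ℕ → Fin 2)
    (hC' : ∀ (A : Finset ℕ) (h : A.Nonempty), ExactlyLarge A → 1 ≤ A.min' h →
      (C' A = 1 ↔ ∀ S S' : Finset ℕ,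
        S ⊆ A.image (· - 1) → S' ⊆ A.image (· - 1) →
        ExactlyLarge S → ExactlyLarge S' →
        S.min = ((A.min' h - 1 : ℕ) : WithTop ℕ) →
        S'.min = ((A.min' h - 1 : ℕ) : WithTop ℕ) → C S = C S'))
    (X : Set ℕ) (hX : X.Infinite) (hhom : HomogFor C' X) :
    MinHomogFor C ((fun x => x - 1) '' X) := by
  obtain ⟨c, hc⟩ := hhom
  set Y : Set ℕ := (fun x => x - 1) '' X with hYdef
  have hYsucc : ∀ y ∈ Y, 1 ≤ y → y + 1 ∈ X := by
    rintro y ⟨x, hxX, rfl⟩ hy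
    dsimp only at hy ⊢
    have hx2 : 2 ≤ x := by omega
    have : x - 1 + 1 = x := by omega
    rwa [this]
  have hYinf : Y.Infinite := by
    have h1 : (X \ Set.Iic 1).Infinite := hX.diff (Set.finite_Iic 1)
    have h2 : ((fun x => x - 1) '' (X \ Set.Iic 1)).Infinite := by
      apply h1.image
      intro a ha b hb hab
      have ha' : 1 < a := by simpa using ha.2
      have hb' : 1 < b := by simpa using hb.2
      dsimp only at hab
      omega
    exact h2.mono (Set.image_mono Set.diff_subset)
  -- the homogeneous color is 1
  have hc1 : c = 1 := by
    obtain ⟨x, hxX'⟩ := (hX.diff (Set.finite_Iic 1)).nonempty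
    have hxX : x ∈ X := hxX'.1
    have hx2 : 2 ≤ x := by have := hxX'.2; simp at this; omega
    set m := x - 1 with hm
    have hm1 : 1 ≤ m := by omega
    have hxm : x = m + 1 := by omega
    set X' : Set ℕ := (fun t => t - 1) '' (X \ Set.Iic x) with hX'def
    have hX'inf : X'.Infinite := by
      apply (hX.diff (Set.finite_Iic x)).image
      intro a ha b hb hab
      have ha' : x < a := by simpa using ha.2
      have hb' : x < b := by simpa using hb.2
      dsimp only at hab
      omega
    have hX'prop : ∀ t ∈ X', t + 1 ∈ X ∧ m < t := by
      rintro t ⟨u, hu, rfl⟩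
      have hu' : x < u := by simpa using hu.2
      dsimp only
      constructor
      · have : u - 1 + 1 = u := by omega
        rw [this]; exact hu.1
      · omega
    have hbound : ∀ T : Finset ℕ, ↑T ⊆ X' → T.card = m → C (insert m T) < m := by
      intro T hT hTc
      have hTgt : ∀ t ∈ T, m < t := fun t ht => (hX'prop t (hT ht)).2
      have hmnT : m ∉ T := fun h => lt_irrefl m (hTgt m h)
      have hne : (insert m T).Nonempty := Finset.insert_nonempty m T
      have hmin : (insert m T).min' hne = m :=
        aux_min' m _ (Finset.mem_insert_self m T) (by
          intro s hs
          rcases Finset.mem_insert.mp hs with rfl | hs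
          · exact le_refl m
          · exact le_of_lt (hTgt s hs)) hne
      have hEL : ExactlyLarge (insert m T) := by
        refine ⟨hne, ?_⟩
        rw [hmin, Finset.card_insert_of_notMem hmnT, hTc]
      have := hreg _ hEL hne (by rw [hmin]; omega)
      rwa [hmin] at this
    obtain ⟨Y₀, hY₀sub, hY₀inf, c₀, hc₀m, hc₀⟩ :=
      infRamsey m m (fun T => C (insert m T)) X' hX'inf hbound
    obtain ⟨T₀, hT₀Y₀, hT₀card⟩ := hY₀inf.exists_subset_card_eq (m + 1)
    have hT₀X' : ∀ t ∈ T₀, t ∈ X' := fun t ht => hY₀sub (hT₀Y₀ ht)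
    have hT₀gt : ∀ t ∈ T₀, m < t := fun t ht => (hX'prop t (hT₀X' t ht)).2
    have hT₀X : ∀ t ∈ T₀, t + 1 ∈ X := fun t ht => (hX'prop t (hT₀X' t ht)).1
    set A : Finset ℕ := insert x (T₀.image (· + 1)) with hAdef
    have hAX : ↑A ⊆ X := by
      intro a ha
      simp only [hAdef, Finset.coe_insert, Set.mem_insert_iff, Finset.coe_image,
        Set.mem_image, Finset.mem_coe] at ha
      rcases ha with rfl | ⟨t, ht, rfl⟩
      · exact hxX
      · exact hT₀X t ht
    have hxnotin : x ∉ T₀.image (· + 1) := by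
      intro h
      obtain ⟨t, ht, hteq⟩ := Finset.mem_image.mp h
      have := hT₀gt t ht
      omega
    have hAcard : A.card = m + 2 := by
      rw [hAdef, Finset.card_insert_of_notMem hxnotin,
        Finset.card_image_of_injective _ (add_left_injective 1), hT₀card]
    have hAne : A.Nonempty := ⟨x, Finset.mem_insert_self x _⟩
    have hAmin : A.min' hAne = x := by
      apply aux_min'
      · exact Finset.mem_insert_self x _
      · intro a ha
        rcases Finset.mem_insert.mp ha with h | ha
        · exact h.ge
        · obtain ⟨t, ht, rfl⟩ := Finset.mem_image.mp ha
          have := hT₀gt t ht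
          omega
    have hAEL : ExactlyLarge A := ⟨hAne, by rw [hAmin, hAcard, hxm]⟩
    have himg : A.image (· - 1) = insert m T₀ := by
      rw [hAdef, Finset.image_insert, Finset.image_image]
      have h1 : x - 1 = m := by omega
      have h2 : Finset.image ((fun x => x - 1) ∘ fun x : ℕ => x + 1) T₀ = T₀ := by
        rw [show ((fun x => x - 1) ∘ fun x : ℕ => x + 1) = id by funext t; simp]
        exact Finset.image_id
      rw [h1, h2]
    have hC'A : C' A = 1 := by
      rw [hC' A hAne hAEL (by rw [hAmin]; omega)]
      intro S S' hS hS' hELS hELS' hminS hminS'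
      rw [hAmin] at hminS hminS'
      have key : ∀ P : Finset ℕ, P ⊆ A.image (· - 1) → ExactlyLarge P →
          P.min = ((x - 1 : ℕ) : WithTop ℕ) → C P = c₀ := by
        intro P hP ⟨hPne, hPcard⟩ hPmin
        have hPmin' : P.min' hPne = m := by
          have := Finset.coe_min' hPne
          rw [hPmin] at this
          rw [hm]
          exact WithTop.coe_inj.mp this
        have hmP : m ∈ P := hPmin' ▸ P.min'_mem hPne
        have hPc : P.card = m + 1 := by rw [hPcard, hPmin']
        have hPsub : P ⊆ insert m T₀ := himg ▸ hP
        set T := P.erase m with hTdef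
        have hTsub : ↑T ⊆ Y₀ := by
          intro b hb
          simp only [hTdef, Finset.coe_erase, Set.mem_diff, Finset.mem_coe,
            Set.mem_singleton_iff] at hb
          rcases Finset.mem_insert.mp (hPsub hb.1) with h | h
          · exact absurd h hb.2
          · exact hT₀Y₀ h
        have hTc : T.card = m := by
          rw [hTdef, Finset.card_erase_of_mem hmP, hPc]
          omega
        have := hc₀ T hTsub hTc
        rwa [← Finset.insert_erase hmP]
      rw [key S hS hELS hminS, key S' hS' hELS' hminS']
    rw [← hc A hAX hAEL, hC'A]
  -- swap lemma
  have swap : ∀ m : ℕ, 1 ≤ m → ∀ P Q : Finset ℕ, ↑P ⊆ Y → ↑Q ⊆ Y → m ∈ P → m ∈ Q →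
      P.card = m + 1 → Q.card = m + 1 → (∀ p ∈ P, m ≤ p) → (∀ q ∈ Q, m ≤ q) →
      (P ∪ Q).card ≤ m + 2 → C P = C Q := by
    intro m hm P Q hPY hQY hmP hmQ hPc hQc hPge hQge hUc
    by_cases hPQ : P = Q
    · rw [hPQ]
    set U := P ∪ Q with hUdef
    have hPU : P ⊆ U := Finset.subset_union_left
    have hQU : Q ⊆ U := Finset.subset_union_right
    have hPssU : P ⊂ U := by
      refine ⟨hPU, fun hUP => ?_⟩
      exact hPQ ((Finset.eq_of_subset_of_card_le (hQU.trans hUP) (by omega)).symm)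
    have hUcard : U.card = m + 2 := le_antisymm hUc (by
      have := Finset.card_lt_card hPssU
      omega)
    have hUge : ∀ u ∈ U, m ≤ u := by
      intro u hu
      rcases Finset.mem_union.mp hu with h | h
      · exact hPge u h
      · exact hQge u h
    have hUY : ↑U ⊆ Y := by
      intro u hu
      rcases Finset.mem_union.mp (by exact_mod_cast hu) with h | h
      · exact hPY h
      · exact hQY h
    set A : Finset ℕ := U.image (· + 1) with hAdef
    have hAX : ↑A ⊆ X := by
      intro a ha
      simp only [hAdef, Finset.coe_image, Set.mem_image, Finset.mem_coe] at ha
      obtain ⟨u, hu, rfl⟩ := ha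
      exact hYsucc u (hUY hu) (le_trans hm (hUge u hu))
    have hAcard : A.card = m + 2 := by
      rw [hAdef, Finset.card_image_of_injective _ (add_left_injective 1), hUcard]
    have hAne : A.Nonempty := ⟨m + 1, Finset.mem_image.mpr ⟨m, hPU hmP, rfl⟩⟩
    have hAmin : A.min' hAne = m + 1 := by
      apply aux_min'
      · exact Finset.mem_image.mpr ⟨m, hPU hmP, rfl⟩
      · intro a ha
        obtain ⟨u, hu, rfl⟩ := Finset.mem_image.mp ha
        have := hUge u hu
        omega
    have hAEL : ExactlyLarge A := ⟨hAne, by rw [hAmin, hAcard]⟩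
    have himg : A.image (· - 1) = U := by
      rw [hAdef, Finset.image_image]
      rw [show ((fun x => x - 1) ∘ fun x : ℕ => x + 1) = id by funext t; simp]
      exact Finset.image_id
    have hminP : P.min = ((A.min' hAne - 1 : ℕ) : WithTop ℕ) := by
      rw [hAmin]
      simp only [Nat.add_sub_cancel]
      rw [← Finset.coe_min' ⟨m, hmP⟩]
      congr 1
      exact aux_min' m P hmP hPge _
    have hminQ : Q.min = ((A.min' hAne - 1 : ℕ) : WithTop ℕ) := by
      rw [hAmin]
      simp only [Nat.add_sub_cancel]
      rw [← Finset.coe_min' ⟨m, hmQ⟩]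
      congr 1
      exact aux_min' m Q hmQ hQge _
    have hELP : ExactlyLarge P := ⟨Finset.card_pos.mp (by omega), by rw [aux_min' m P hmP hPge, hPc]⟩
    have hELQ : ExactlyLarge Q := ⟨Finset.card_pos.mp (by omega), by rw [aux_min' m Q hmQ hQge, hQc]⟩
    have hC'A : C' A = 1 := by rw [hc A hAX hAEL, hc1]
    exact (hC' A hAne hAEL (by rw [hAmin]; omega)).mp hC'A P Q
      (himg ▸ hPU) (himg ▸ hQU) hELP hELQ hminP hminQ
  -- chain lemma
  have step : ∀ m : ℕ, 1 ≤ m → ∀ T : Finset ℕ, ↑T ⊆ Y → T.card = m → (∀ t ∈ T, m < t) →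
      ∀ k : ℕ, ∀ P : Finset ℕ, ↑P ⊆ Y → m ∈ P → P.card = m + 1 → (∀ p ∈ P, m ≤ p) →
      (P \ insert m T).card = k → C P = C (insert m T) := by
    intro m hm T hTY hTc hTgt k
    have hmnT : m ∉ T := fun h => lt_irrefl m (hTgt m h)
    have hIc : (insert m T).card = m + 1 := by
      rw [Finset.card_insert_of_notMem hmnT, hTc]
    induction k with
    | zero =>
      intro P hPY hmP hPc hPge hk
      have hsub : P ⊆ insert m T := by
        intro b hb
        by_contra hbn
        have : b ∈ P \ insert m T := Finset.mem_sdiff.mpr ⟨hb, hbn⟩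
        rw [Finset.card_eq_zero.mp hk] at this
        exact absurd this (Finset.notMem_empty b)
      rw [Finset.eq_of_subset_of_card_le hsub (by omega)]
    | succ k ihk =>
      intro P hPY hmP hPc hPge hk
      obtain ⟨a, ha⟩ : (P \ insert m T).Nonempty := Finset.card_pos.mp (by omega)
      have haP : a ∈ P := (Finset.mem_sdiff.mp ha).1
      have haI : a ∉ insert m T := (Finset.mem_sdiff.mp ha).2
      have ham : a ≠ m := fun h => haI (h ▸ Finset.mem_insert_self m T)
      obtain ⟨t, htT, htP⟩ : ∃ t ∈ T, t ∉ P := by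
        by_contra hcon
        push_neg at hcon
        have hsub : insert m T ⊆ P := by
          intro b hb
          rcases Finset.mem_insert.mp hb with rfl | hb
          · exact hmP
          · exact hcon b hb
        have : insert m T = P := Finset.eq_of_subset_of_card_le hsub (by omega)
        rw [← this] at ha
        exact haI (Finset.mem_sdiff.mp ha).1
      set Q : Finset ℕ := insert t (P.erase a) with hQdef
      have htPe : t ∉ P.erase a := fun h => htP (Finset.mem_of_mem_erase h)
      have hQc : Q.card = m + 1 := by
        rw [hQdef, Finset.card_insert_of_notMem htPe, Finset.card_erase_of_mem haP, hPc]
        omega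
      have hmQ : m ∈ Q := by
        rw [hQdef]
        exact Finset.mem_insert_of_mem (Finset.mem_erase.mpr ⟨(Ne.symm ham), hmP⟩)
      have hQge : ∀ q ∈ Q, m ≤ q := by
        intro q hq
        rcases Finset.mem_insert.mp hq with rfl | hq
        · exact le_of_lt (hTgt q htT)
        · exact hPge q (Finset.mem_of_mem_erase hq)
      have hQY : ↑Q ⊆ Y := by
        intro q hq
        simp only [hQdef, Finset.coe_insert, Set.mem_insert_iff, Finset.coe_erase,
          Set.mem_diff, Finset.mem_coe] at hq
        rcases hq with rfl | ⟨hq, _⟩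
        · exact hTY htT
        · exact hPY hq
      have hPQU : (P ∪ Q).card ≤ m + 2 := by
        have hsub : P ∪ Q ⊆ insert t P := by
          intro b hb
          rcases Finset.mem_union.mp hb with hb | hb
          · exact Finset.mem_insert_of_mem hb
          · rcases Finset.mem_insert.mp hb with rfl | hb
            · exact Finset.mem_insert_self b P
            · exact Finset.mem_insert_of_mem (Finset.mem_of_mem_erase hb)
        calc (P ∪ Q).card ≤ (insert t P).card := Finset.card_le_card hsub
          _ ≤ m + 2 := by
            rw [Finset.card_insert_of_notMem htP, hPc]
      have hswap : C P = C Q := swap m hm P Q hPY hQY hmP hmQ hPc hQc hPge hQge hPQU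
      have hQk : (Q \ insert m T).card = k := by
        have heq : Q \ insert m T = (P \ insert m T).erase a := by
          ext b
          simp only [hQdef, Finset.mem_sdiff, Finset.mem_insert, Finset.mem_erase]
          constructor
          · rintro ⟨rfl | ⟨hba, hbP⟩, hbI⟩
            · exact absurd (Or.inr htT) hbI
            · exact ⟨hba, hbP, hbI⟩
          · rintro ⟨hba, hbP, hbI⟩
            exact ⟨Or.inr ⟨hba, hbP⟩, hbI⟩
        rw [heq, Finset.card_erase_of_mem ha, hk]
        omega
      rw [hswap]
      exact ihk Q hQY hmQ hQc hQge hQk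
  -- main assembly
  intro S S' hSY hS'Y hELS hELS' hmin
  obtain ⟨hne, hcard⟩ := hELS
  obtain ⟨hne', hcard'⟩ := hELS'
  set m := S.min' hne with hmdef
  have hmin' : S'.min' hne' = m := by
    have h1 := Finset.coe_min' hne
    have h2 := Finset.coe_min' hne'
    rw [hmin] at h1
    rw [← h2] at h1
    have h3 : S.min' hne = S'.min' hne' := WithTop.coe_inj.mp h1
    exact h3.symm
  rcases Nat.eq_zero_or_pos m with hm0 | hmpos
  · have hS1 : S.card = 1 := by omega
    have hS'1 : S'.card = 1 := by rw [hcard', hmin', hm0]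
    obtain ⟨a, rfl⟩ := Finset.card_eq_one.mp hS1
    obtain ⟨b, rfl⟩ := Finset.card_eq_one.mp hS'1
    have ha : a = 0 := by
      have := hmdef
      simp [Finset.min'_singleton] at this
      omega
    have hb : b = 0 := by
      have := hmin'
      simp [Finset.min'_singleton] at this
      omega
    rw [ha, hb]
  · set M := (S ∪ S').max' ⟨m, Finset.mem_union_left _ (S.min'_mem hne)⟩ with hMdef
    obtain ⟨T, hTsub, hTcard⟩ :=
      (hYinf.diff (Set.finite_Iic (M + m))).exists_subset_card_eq m
    have hTY : ↑T ⊆ Y := fun t ht => (hTsub ht).1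
    have hTgt : ∀ t ∈ T, m < t := by
      intro t ht
      have := (hTsub ht).2
      simp only [Set.mem_Iic, not_le] at this
      omega
    have h1 : C S = C (insert m T) :=
      step m hmpos T hTY hTcard hTgt (S \ insert m T).card S hSY
        (S.min'_mem hne) (by omega)
        (fun p hp => S.min'_le p hp) rfl
    have h2 : C S' = C (insert m T) :=
      step m hmpos T hTY hTcard hTgt (S' \ insert m T).card S' hS'Y
        (hmin' ▸ S'.min'_mem hne') (by rw [hcard', hmin'])
        (fun p hp => hmin' ▸ S'.min'_le p hp) rfl
    rw [h1, h2]
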